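/- Every compact LOTS with a monotone closure-preserving operator is first countable. -/

import Mathlib

open Set Topology Filter

variable {X : Type*}

/-- A family `F` of subsets is closure-preserving if for every subfamily `H ⊆ F`,
the closure of the union of `H` is the union of the closures of members of `H`. -/
def ClosurePreserving [TopologicalSpace X] (F : Set (Set X)) : Prop :=
  ∀ H ⊆ F, closure (⋃₀ H) = ⋃ A ∈ H, closure A

/-- A cover `A` refines a cover `B` if every member of `A` is contained in some member of `B`. -/
def Refines (A B : Set (Set X)) : Prop :=
  ∀ s ∈ A, ∃ t ∈ B, s ⊆ t

/-- An open cover of the space. -/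
def IsOpenCover [TopologicalSpace X] (U : Set (Set X)) : Prop :=
  (∀ s ∈ U, IsOpen s) ∧ ⋃₀ U = Set.univ

/-- A monotone closure-preserving operator: assigns to each open cover `U` a
closure-preserving cover `r U` (by arbitrary sets) refining `U`, monotonically. -/
def MonotoneCPOperator [TopologicalSpace X] (r : Set (Set X) → Set (Set X)) : Prop :=
  (∀ U, IsOpenCover U →
    ⋃₀ r U = Set.univ ∧ Refines (r U) U ∧ ClosurePreserving (r U)) ∧
  ∀ U V, IsOpenCover U → IsOpenCover V → Refines U V → Refines (r U) (r V)

/-- A GO-space: the topology is finer than the order topology (all open rays are open)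
and has a base of order-convex sets. -/
def IsGOSpace (X : Type*) [LinearOrder X] [TopologicalSpace X] : Prop :=
  (∀ a : X, IsOpen (Set.Iio a)) ∧ (∀ a : X, IsOpen (Set.Ioi a)) ∧
  ∀ s : Set X, IsOpen s → ∀ x ∈ s, ∃ t : Set X, IsOpen t ∧ x ∈ t ∧ t ⊆ s ∧ t.OrdConnected

section Aux

variable [LinearOrder X] [TopologicalSpace X] [OrderTopology X]

/-- The auxiliary cover `{Iio b : b < y} ∪ {Ioi a}`. -/
private def Cv (y a : X) : Set (Set X) := ((fun b => Iio b) '' Iio y) ∪ {Ioi a}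

private lemma isOpenCover_Cv {y a : X} (hlim : ∀ w, w < y → ∃ v, w < v ∧ v < y)
    (ha : a < y) : IsOpenCover (Cv y a) := by
  constructor
  · rintro s (⟨b, -, rfl⟩ | rfl)
    · exact isOpen_Iio
    · exact isOpen_Ioi
  · apply eq_univ_of_forall
    intro z
    rcases lt_or_ge z y with hz | hz
    · obtain ⟨v, hzv, hvy⟩ := hlim z hz
      exact ⟨Iio v, Or.inl ⟨v, hvy, rfl⟩, hzv⟩
    · exact ⟨Ioi a, Or.inr rfl, lt_of_lt_of_le ha hz⟩

omit [TopologicalSpace X] [OrderTopology X] in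
private lemma refines_Cv {y a a' : X} (h : a ≤ a') : Refines (Cv y a') (Cv y a) := by
  rintro s (hs | rfl)
  · exact ⟨s, Or.inl hs, subset_rfl⟩
  · exact ⟨Ioi a, Or.inr rfl, Ioi_subset_Ioi h⟩

private lemma threshold {r : Set (Set X) → Set (Set X)} (hr : MonotoneCPOperator r)
    {y : X} (hmin : ∃ l, l < y) (hlim : ∀ w, w < y → ∃ v, w < v ∧ v < y)
    {a : X} (ha : a < y) :
    ∃ c, c < y ∧ ∀ A ∈ r (Cv y a), (∃ t ∈ A, c < t ∧ t ≤ y) → A ⊆ Ioi a := by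
  obtain ⟨hcov, href, hcp⟩ := hr.1 (Cv y a) (isOpenCover_Cv hlim ha)
  set L : Set (Set X) := {A ∈ r (Cv y a) | ∃ b, b < y ∧ A ⊆ Iio b} with hL
  have hyL : y ∉ closure (⋃₀ L) := by
    rw [hcp L (sep_subset _ _)]
    simp only [mem_iUnion]
    rintro ⟨A, hA, hyA⟩
    obtain ⟨b, hby, hAb⟩ := hA.2
    have : y ∈ Iic b :=
      closure_minimal (hAb.trans Iio_subset_Iic_self) isClosed_Iic hyA
    exact absurd this (not_le.2 hby)
  obtain ⟨c, hcy, hIoc⟩ :=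
    exists_Ioc_subset_of_mem_nhds (isClosed_closure.isOpen_compl.mem_nhds hyL) hmin
  refine ⟨c, hcy, ?_⟩
  rintro A hA ⟨t, htA, hct, hty⟩
  obtain ⟨s, hs, hAs⟩ := href A hA
  rcases hs with ⟨b, hby, rfl⟩ | rfl
  · exfalso
    have htL : t ∈ ⋃₀ L := ⟨A, ⟨hA, b, hby, hAs⟩, htA⟩
    exact hIoc ⟨hct, hty⟩ (subset_closure htL)
  · exact hAs

private lemma exists_cofinal_left [CompactSpace X] {r : Set (Set X) → Set (Set X)}
    (hr : MonotoneCPOperator r) {y : X} (hmin : ∃ l, l < y)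
    (hlim : ∀ w, w < y → ∃ v, w < v ∧ v < y) :
    ∃ g : ℕ → X, (∀ n, g n < y) ∧ ∀ u, u < y → ∃ n, u < g n := by
  by_contra hcon
  push_neg at hcon
  have step : ∀ a : {a : X // a < y}, ∃ a' : {a : X // a < y}, a.1 < a'.1 ∧
      ∀ A ∈ r (Cv y a.1), (∃ t ∈ A, a'.1 ≤ t ∧ t ≤ y) → A ⊆ Ioi a.1 := by
    rintro ⟨a, ha⟩
    obtain ⟨c, hcy, hP⟩ := threshold hr hmin hlim ha
    obtain ⟨v, hv1, hv2⟩ := hlim (max a c) (max_lt ha hcy)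
    refine ⟨⟨v, hv2⟩, lt_of_le_of_lt (le_max_left a c) hv1, ?_⟩
    rintro A hA ⟨t, htA, hvt, hty⟩
    exact hP A hA ⟨t, htA, lt_of_lt_of_le (lt_of_le_of_lt (le_max_right a c) hv1) hvt, hty⟩
  choose next hlt hP using step
  obtain ⟨l, hl⟩ := hmin
  set q : ℕ → {a : X // a < y} := fun n => next^[n] ⟨l, hl⟩ with hq
  have hqsucc : ∀ n, q (n + 1) = next (q n) := fun n =>
    Function.iterate_succ_apply' next n ⟨l, hl⟩
  set g : ℕ → X := fun n => (q n).1 with hg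
  have hgy : ∀ n, g n < y := fun n => (q n).2
  -- the least upper bound of the sequence
  have hKc : IsCompact (closure (range g)) := isClosed_closure.isCompact
  obtain ⟨z, -, hzlub⟩ := hKc.exists_isLUB ⟨g 0, subset_closure (mem_range_self 0)⟩
  have hlub : IsLUB (range g) z := by
    constructor
    · intro x hx; exact hzlub.1 (subset_closure hx)
    · intro b hb
      exact hzlub.2 (by rw [upperBounds_closure]; exact hb)
  have hq_lt_z : ∀ n, g n < z := by
    intro n
    have h1 : g n < g (n + 1) := by
      have := hlt (q n); rw [← hqsucc n] at this; exact this
    exact lt_of_lt_of_le h1 (hlub.1 (mem_range_self (n + 1)))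
  have hzy : z < y := by
    obtain ⟨u, huy, hub⟩ := hcon g hgy
    refine lt_of_le_of_lt (hlub.2 ?_) huy
    rintro x ⟨n, rfl⟩; exact hub n
  -- closure-preservation at `z` in `r (Cv y z)`
  obtain ⟨hcov, href, hcp⟩ := hr.1 (Cv y z) (isOpenCover_Cv hlim hzy)
  set B : Set (Set X) := {A ∈ r (Cv y z) | z ∉ closure A} with hB
  have hzB : z ∉ closure (⋃₀ B) := by
    rw [hcp B (sep_subset _ _)]
    simp only [mem_iUnion]
    rintro ⟨A, hA, hz⟩
    exact hA.2 hz
  obtain ⟨u, huz, hIoc⟩ :=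
    exists_Ioc_subset_of_mem_nhds (isClosed_closure.isOpen_compl.mem_nhds hzB)
      ⟨g 0, hq_lt_z 0⟩
  obtain ⟨m, hm⟩ : ∃ m, u < g m := by
    by_contra h
    push_neg at h
    have : z ≤ u := hlub.2 (by rintro x ⟨n, rfl⟩; exact h n)
    exact absurd this (not_le.2 huz)
  have hgm : g m ∈ ⋃₀ r (Cv y z) := by rw [hcov]; trivial
  obtain ⟨A, hA, hqA⟩ := hgm
  have hzA : z ∈ closure A := by
    by_contra hz
    exact hIoc ⟨hm, (hq_lt_z m).le⟩ (subset_closure ⟨A, ⟨hA, hz⟩, hqA⟩)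
  -- transport `A` into the coarser family `r (Cv y (g m))`
  have href2 : Refines (r (Cv y z)) (r (Cv y (g m))) :=
    hr.2 _ _ (isOpenCover_Cv hlim hzy) (isOpenCover_Cv hlim (hgy m))
      (refines_Cv (hq_lt_z m).le)
  obtain ⟨E, hE, hAE⟩ := href2 A hA
  -- find a point of `A` above the threshold
  have hWopen : IsOpen (Ioi (g (m + 1)) ∩ Iio y) := isOpen_Ioi.inter isOpen_Iio
  have hWz : z ∈ Ioi (g (m + 1)) ∩ Iio y := ⟨hq_lt_z (m + 1), hzy⟩
  obtain ⟨t, ⟨ht1, ht2⟩, htA⟩ := mem_closure_iff.1 hzA _ hWopen hWz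
  have hEsub : E ⊆ Ioi (g m) := by
    refine hP (q m) E hE ⟨t, hAE htA, ?_, ht2.le⟩
    have h5 : g (m + 1) = (next (q m)).1 := congrArg Subtype.val (hqsucc m)
    rw [← h5]; exact ht1.le
  exact lt_irrefl (g m) (hEsub (hAE hqA))

private lemma left_cg [CompactSpace X] {r : Set (Set X) → Set (Set X)}
    (hr : MonotoneCPOperator r) (y : X) : (𝓝[≤] y).IsCountablyGenerated := by
  by_cases hmin : ∃ l, l < y
  · by_cases hlim : ∀ w, w < y → ∃ v, w < v ∧ v < y
    · obtain ⟨g, hg, hcof⟩ := exists_cofinal_left hr hmin hlim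
      have hb2 : (𝓝[≤] y).HasBasis (fun _ : ℕ => True) (fun n => Ioc (g n) y) := by
        refine (nhdsLE_basis_of_exists_lt hmin).to_hasBasis (fun l hl => ?_)
          (fun n _ => ⟨g n, hg n, subset_rfl⟩)
        obtain ⟨n, hn⟩ := hcof l hl
        exact ⟨n, trivial, Ioc_subset_Ioc_left hn.le⟩
      exact hb2.isCountablyGenerated
    · push_neg at hlim
      obtain ⟨w, hwy, hempty⟩ := hlim
      have hb2 : (𝓝[≤] y).HasBasis (fun _ : Unit => True) (fun _ => Ioc w y) := by
        refine (nhdsLE_basis_of_exists_lt hmin).to_hasBasis (fun l hl => ?_)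
          (fun _ _ => ⟨w, hwy, subset_rfl⟩)
        refine ⟨(), trivial, ?_⟩
        rintro t ⟨htw, hty⟩
        rcases lt_or_eq_of_le hty with h | h
        · exact absurd h (not_lt.2 (hempty t htw))
        · exact ⟨lt_of_lt_of_le hl (le_of_eq h.symm), hty⟩
      exact hb2.isCountablyGenerated
  · push_neg at hmin
    have hIic : Iic y = {y} := by
      ext t
      simp only [mem_Iic, mem_singleton_iff]
      exact ⟨fun h => le_antisymm h (hmin t), fun h => h ▸ le_rfl⟩
    have : 𝓝[≤] y = pure y := by
      rw [nhdsWithin, hIic, ← nhdsWithin, nhdsWithin_singleton]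
    rw [this]
    infer_instance

end Aux

/-- A compact LOTS with a monotone closure-preserving operator is first countable. -/
theorem stmt5 [LinearOrder X] [TopologicalSpace X] [OrderTopology X] [CompactSpace X]
    (r : Set (Set X) → Set (Set X)) (hr : MonotoneCPOperator r) :
    FirstCountableTopology X := by
  refine ⟨fun y => ?_⟩
  rw [← nhdsLE_sup_nhdsGE y]
  have hL : (𝓝[≤] y).IsCountablyGenerated := left_cg hr y
  have hR : (𝓝[≥] y).IsCountablyGenerated := by
    haveI : CompactSpace Xᵒᵈ := ‹CompactSpace X›
    have hdual : MonotoneCPOperator (X := Xᵒᵈ) r := hr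
    exact left_cg (X := Xᵒᵈ) hdual (OrderDual.toDual y)
  exact @Filter.Sup.isCountablyGenerated _ _ _ hL hR
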